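/- Let X be a locally compact, Hausdorff, connected space, let 𝔅 be a subalgebra of C_b(X) containing C_c(X), and let ρ be a (positive) quasi-linear functional on 𝔅. If f, g ∈ C_c(X) and f ≥ g, then ρ(f) ≥ ρ(g). -/

import Mathlib

open Set Filter Topology MeasureTheory
open scoped ENNReal BoundedContinuousFunction

universe u

/-- A topological measure on `X`: a set function on subsets of `X` (only its values on open
and closed sets matter), not identically `∞` on open/closed sets, satisfying (TM1)–(TM3). -/
structure TopMeasure (X : Type u) [TopologicalSpace X] where
  toFun : Set X → ℝ≥0∞
  not_all_top : ∃ A : Set X, (IsOpen A ∨ IsClosed A) ∧ toFun A ≠ ∞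
  tm1 : ∀ A B : Set X, Disjoint A B → (IsOpen A ∨ IsCompact A) → (IsOpen B ∨ IsCompact B) →
      (IsOpen (A ∪ B) ∨ IsCompact (A ∪ B)) → toFun (A ∪ B) = toFun A + toFun B
  tm2 : ∀ U : Set X, IsOpen U → toFun U = ⨆ K ∈ {K : Set X | IsCompact K ∧ K ⊆ U}, toFun K
  tm3 : ∀ F : Set X, IsClosed F → toFun F = ⨅ U ∈ {U : Set X | IsOpen U ∧ F ⊆ U}, toFun U

/-- `μ` is compact-finite. -/
def TopMeasure.CompactFinite {X : Type u} [TopologicalSpace X] (μ : TopMeasure X) : Prop :=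
  ∀ K : Set X, IsCompact K → μ.toFun K ≠ ∞

/-- The set of compactly supported continuous functions, inside `C_b(X)`. -/
def CcS (X : Type u) [TopologicalSpace X] : Set (X →ᵇ ℝ) :=
  {f | HasCompactSupport (f : X → ℝ)}

/-- The set of continuous functions vanishing at infinity, inside `C_b(X)`. -/
def C0S (X : Type u) [TopologicalSpace X] : Set (X →ᵇ ℝ) :=
  {f | Tendsto (f : X → ℝ) (cocompact X) (nhds 0)}

/-- `𝔅` is a (non-unital) subalgebra of `C_b(X)`. -/
def IsSubalgS {X : Type u} [TopologicalSpace X] (𝔅 : Set (X →ᵇ ℝ)) : Prop :=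
  (∀ f g : X →ᵇ ℝ, f ∈ 𝔅 → g ∈ 𝔅 → f + g ∈ 𝔅) ∧
  (∀ f g : X →ᵇ ℝ, f ∈ 𝔅 → g ∈ 𝔅 → f * g ∈ 𝔅) ∧
  (∀ (c : ℝ) (f : X →ᵇ ℝ), f ∈ 𝔅 → c • f ∈ 𝔅)

/-- The singly generated subalgebra `B(h)`: the smallest closed (in `𝔅`) subalgebra of `𝔅`
containing `h`. -/
def sgen {X : Type u} [TopologicalSpace X] (𝔅 : Set (X →ᵇ ℝ)) (h : X →ᵇ ℝ) :
    Set (X →ᵇ ℝ) :=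
  ⋂₀ {S : Set (X →ᵇ ℝ) | S ⊆ 𝔅 ∧ h ∈ S ∧
      (∀ f g : X →ᵇ ℝ, f ∈ S → g ∈ S → f + g ∈ S) ∧
      (∀ f g : X →ᵇ ℝ, f ∈ S → g ∈ S → f * g ∈ S) ∧
      (∀ (c : ℝ) (f : X →ᵇ ℝ), f ∈ S → c • f ∈ S) ∧
      IsClosed {x : ↥𝔅 | (x : X →ᵇ ℝ) ∈ S}}

/-- A signed quasi-linear functional on `𝔅` (QI1), (QI2). -/
structure SignedQLF {X : Type u} [TopologicalSpace X] (𝔅 : Set (X →ᵇ ℝ)) where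
  toFun : (X →ᵇ ℝ) → ℝ
  smul_eq : ∀ (a : ℝ) (f : X →ᵇ ℝ), f ∈ 𝔅 → toFun (a • f) = a * toFun f
  add_eq : ∀ h ∈ 𝔅, ∀ f g : X →ᵇ ℝ, f ∈ sgen 𝔅 h → g ∈ sgen 𝔅 h →
      toFun (f + g) = toFun f + toFun g

/-- A (positive) quasi-linear functional on `𝔅` (QI1)–(QI3). -/
structure QLF {X : Type u} [TopologicalSpace X] (𝔅 : Set (X →ᵇ ℝ)) extends SignedQLF 𝔅 where
  pos : ∀ f : X →ᵇ ℝ, f ∈ 𝔅 → 0 ≤ f → 0 ≤ toFun f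

/-- `‖ρ‖ = sup {ρ(f) : f ∈ 𝔅, 0 ≤ f ≤ 1}`, as an extended real number. -/
noncomputable def qnorm {X : Type u} [TopologicalSpace X] {𝔅 : Set (X →ᵇ ℝ)} (ρ : QLF 𝔅) :
    ℝ≥0∞ :=
  ⨆ f ∈ {f : X →ᵇ ℝ | f ∈ 𝔅 ∧ 0 ≤ f ∧ f ≤ 1}, ENNReal.ofReal (ρ.toFun f)

/-- `m` is the measure `m_f` on `ℝ` associated with a finite topological measure `μ` and
`f ∈ C₀(X)` (case (A)): `m(W) = μ(f⁻¹(W))` for every open `W ⊆ ℝ`. -/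
def IsMfA {X : Type u} [TopologicalSpace X] (μ : TopMeasure X) (f : X →ᵇ ℝ)
    (m : Measure ℝ) : Prop :=
  ∀ W : Set ℝ, IsOpen W → m W = μ.toFun ((f : X → ℝ) ⁻¹' W)

/-- `m` is the measure `m_f` on `ℝ` associated with a compact-finite topological measure `μ`
and `f ∈ C_c(X)` (case (B)): `m(W) = μ(f⁻¹(W \ {0}))` for every open `W ⊆ ℝ`. -/
def IsMfB {X : Type u} [TopologicalSpace X] (μ : TopMeasure X) (f : X →ᵇ ℝ)
    (m : Measure ℝ) : Prop :=
  ∀ W : Set ℝ, IsOpen W → m W = μ.toFun ((f : X → ℝ) ⁻¹' (W \ {0}))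

/-- The support of a (Borel) measure on `ℝ`. -/
def msupp (m : Measure ℝ) : Set ℝ := {x : ℝ | ∀ U ∈ nhds x, 0 < m U}

/-- The set function `μ_ρ` on open sets:
`μ_ρ(U) = sup {ρ(f) : f ∈ C_c(X), 0 ≤ f ≤ 1, supp f ⊆ U}`. -/
noncomputable def muO {X : Type u} [TopologicalSpace X] {𝔅 : Set (X →ᵇ ℝ)} (ρ : QLF 𝔅)
    (U : Set X) : ℝ≥0∞ :=
  ⨆ f ∈ {f : X →ᵇ ℝ | f ∈ CcS X ∧ 0 ≤ f ∧ f ≤ 1 ∧ tsupport (f : X → ℝ) ⊆ U},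
    ENNReal.ofReal (ρ.toFun f)

/-- The set function `μ_ρ` on closed sets: `μ_ρ(F) = inf {μ_ρ(U) : U open, F ⊆ U}`. -/
noncomputable def muC {X : Type u} [TopologicalSpace X] {𝔅 : Set (X →ᵇ ℝ)} (ρ : QLF 𝔅)
    (F : Set X) : ℝ≥0∞ :=
  ⨅ U ∈ {U : Set X | IsOpen U ∧ F ⊆ U}, muO ρ U

open Classical in
/-- The set function `μ_ρ`. -/
noncomputable def muR {X : Type u} [TopologicalSpace X] {𝔅 : Set (X →ᵇ ℝ)} (ρ : QLF 𝔅) :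
    Set X → ℝ≥0∞ :=
  fun A => if IsOpen A then muO ρ A else muC ρ A

/-- `ρ = ρ_μ` on `C₀(X)` (case (A)): for every `f ∈ C₀(X)` and every measure `m_f`
associated with `μ` and `f`, `ρ(f) = ∫_ℝ id dm_f`. -/
def ReprA {X : Type u} [TopologicalSpace X] {𝔅 : Set (X →ᵇ ℝ)} (μ : TopMeasure X)
    (ρ : QLF 𝔅) : Prop :=
  ∀ f ∈ C0S X, ∀ m : Measure ℝ, IsMfA μ f m → ρ.toFun f = ∫ t, t ∂m

/-- `ρ = ρ_μ` on `C_c(X)` (case (B)). -/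
def ReprB {X : Type u} [TopologicalSpace X] {𝔅 : Set (X →ᵇ ℝ)} (μ : TopMeasure X)
    (ρ : QLF 𝔅) : Prop :=
  ∀ f ∈ CcS X, ∀ m : Measure ℝ, IsMfB μ f m → ρ.toFun f = ∫ t, t ∂m

section AuxMono

open BoundedContinuousFunction

variable {X : Type u} [TopologicalSpace X] {𝔅 : Set (X →ᵇ ℝ)}

lemma bcf_le_iff {f g : X →ᵇ ℝ} : f ≤ g ↔ ∀ x, f x ≤ g x := Iff.rfl

lemma mem_CcS_iff {f : X →ᵇ ℝ} : f ∈ CcS X ↔ HasCompactSupport (f : X → ℝ) := Iff.rfl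

lemma sgen_subset (hsub : IsSubalgS 𝔅) {h : X →ᵇ ℝ} (h𝔅 : h ∈ 𝔅) : sgen 𝔅 h ⊆ 𝔅 := by
  intro x hx
  refine hx 𝔅 ⟨subset_rfl, h𝔅, hsub.1, hsub.2.1, hsub.2.2, ?_⟩
  have : {x : ↥𝔅 | (x : X →ᵇ ℝ) ∈ 𝔅} = Set.univ := Set.eq_univ_of_forall fun x => x.2
  rw [this]; exact isClosed_univ

lemma self_mem_sgen {h : X →ᵇ ℝ} : h ∈ sgen 𝔅 h := fun _ hS => hS.2.1

lemma add_mem_sgen {h f g : X →ᵇ ℝ} (hf : f ∈ sgen 𝔅 h) (hg : g ∈ sgen 𝔅 h) :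
    f + g ∈ sgen 𝔅 h := fun S hS => hS.2.2.1 f g (hf S hS) (hg S hS)

lemma mul_mem_sgen {h f g : X →ᵇ ℝ} (hf : f ∈ sgen 𝔅 h) (hg : g ∈ sgen 𝔅 h) :
    f * g ∈ sgen 𝔅 h := fun S hS => hS.2.2.2.1 f g (hf S hS) (hg S hS)

lemma smul_mem_sgen {h f : X →ᵇ ℝ} (c : ℝ) (hf : f ∈ sgen 𝔅 h) :
    c • f ∈ sgen 𝔅 h := fun S hS => hS.2.2.2.2.1 c f (hf S hS)

lemma zero_mem_sgen {h : X →ᵇ ℝ} : (0 : X →ᵇ ℝ) ∈ sgen 𝔅 h := by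
  have := smul_mem_sgen (𝔅 := 𝔅) (h := h) 0 self_mem_sgen
  rwa [zero_smul] at this

lemma sum_mem_sgen {h : X →ᵇ ℝ} {k : ℕ} {a : ℕ → X →ᵇ ℝ}
    (ha : ∀ i ∈ Finset.range k, a i ∈ sgen 𝔅 h) :
    (∑ i ∈ Finset.range k, a i) ∈ sgen 𝔅 h :=
  Finset.sum_induction a (· ∈ sgen 𝔅 h) (fun _ _ hx hy => add_mem_sgen hx hy) zero_mem_sgen ha

lemma pow_mem_sgen {h : X →ᵇ ℝ} (n : ℕ) : h ^ (n + 1) ∈ sgen 𝔅 h := by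
  induction n with
  | zero => simpa using self_mem_sgen
  | succ n ih =>
    rw [pow_succ]
    exact mul_mem_sgen ih self_mem_sgen

lemma closure_mem_sgen (hsub : IsSubalgS 𝔅) {h : X →ᵇ ℝ} (h𝔅 : h ∈ 𝔅) {y : X →ᵇ ℝ}
    (hy𝔅 : y ∈ 𝔅) (hy : y ∈ closure (sgen 𝔅 h)) : y ∈ sgen 𝔅 h := by
  obtain ⟨z, hz, hzy⟩ := mem_closure_iff_seq_limit.1 hy
  intro S hS
  obtain ⟨hS𝔅, hSh, hSa, hSm, hSs, hScl⟩ := hS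
  have hmem : ∀ n, z n ∈ 𝔅 := fun n => sgen_subset hsub h𝔅 (hz n)
  have : Tendsto (fun n => (⟨z n, hmem n⟩ : ↥𝔅)) atTop (𝓝 ⟨y, hy𝔅⟩) := by
    rw [tendsto_subtype_rng]
    exact hzy
  exact hScl.mem_of_tendsto this (Filter.Eventually.of_forall fun n =>
    hz n S ⟨hS𝔅, hSh, hSa, hSm, hSs, hScl⟩)

end AuxMono
section AuxMono2

open BoundedContinuousFunction

variable {X : Type u} [TopologicalSpace X] {𝔅 : Set (X →ᵇ ℝ)}

lemma comp_mem_sgen (hsub : IsSubalgS 𝔅) {h : X →ᵇ ℝ} (h𝔅 : h ∈ 𝔅) {y : X →ᵇ ℝ}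
    (hy𝔅 : y ∈ 𝔅) {φ : ℝ → ℝ} (hφc : Continuous φ) (hφ0 : φ 0 = 0)
    (hxy : ∀ x, y x = φ (h x)) : y ∈ sgen 𝔅 h := by
  apply closure_mem_sgen hsub h𝔅 hy𝔅
  rw [Metric.mem_closure_iff]
  intro ε hε
  set M := ‖h‖ with hMdef
  have hM : 0 ≤ M := norm_nonneg h
  have h0mem : (0 : ℝ) ∈ Set.Icc (-M) M := ⟨by linarith, hM⟩
  have hhmem : ∀ x : X, h x ∈ Set.Icc (-M) M := by
    intro x
    have := h.norm_coe_le_norm x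
    rw [Real.norm_eq_abs, abs_le] at this
    exact ⟨this.1, this.2⟩
  have htop := polynomialFunctions_closure_eq_top (-M) M
  set φ' : C(Set.Icc (-M) M, ℝ) := ContinuousMap.restrict _ ⟨φ, hφc⟩ with hφ'def
  have hφ'cl : φ' ∈ closure (polynomialFunctions (Set.Icc (-M) M) : Set C(Set.Icc (-M) M, ℝ)) := by
    have : φ' ∈ (polynomialFunctions (Set.Icc (-M) M)).topologicalClosure := by
      rw [htop]; exact Algebra.mem_top
    exact this
  rw [Metric.mem_closure_iff] at hφ'cl
  obtain ⟨q, hqmem, hqd⟩ := hφ'cl (ε / 4) (by positivity)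
  rw [SetLike.mem_coe, polynomialFunctions, Subalgebra.mem_map] at hqmem
  obtain ⟨p, -, hpq⟩ := hqmem
  have hqt : ∀ (t : ℝ) (ht : t ∈ Set.Icc (-M) M), q ⟨t, ht⟩ = Polynomial.eval t p := by
    intro t ht
    rw [← hpq]
    rfl
  have happ : ∀ (t : ℝ) (ht : t ∈ Set.Icc (-M) M), |φ t - Polynomial.eval t p| < ε / 4 := by
    intro t ht
    have h1 : dist (φ' ⟨t, ht⟩) (q ⟨t, ht⟩) ≤ dist φ' q := ContinuousMap.dist_apply_le_dist _
    have h2 : φ' ⟨t, ht⟩ = φ t := rfl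
    rw [h2, hqt t ht, Real.dist_eq] at h1
    exact lt_of_le_of_lt h1 hqd
  have hp0 : |Polynomial.eval 0 p| < ε / 4 := by
    have := happ 0 h0mem
    rwa [hφ0, zero_sub, abs_neg] at this
  -- the approximating element of the singly generated subalgebra
  set p' : Polynomial ℝ := p - Polynomial.C (Polynomial.eval 0 p) with hp'def
  have hp'eval : ∀ t : ℝ, Polynomial.eval t p' = Polynomial.eval t p - Polynomial.eval 0 p := by
    intro t; simp [hp'def]
  have hp'c0 : p'.coeff 0 = 0 := by
    simp [hp'def, Polynomial.coeff_zero_eq_eval_zero]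
  set z : X →ᵇ ℝ := ∑ k ∈ Finset.range (p'.natDegree + 1), p'.coeff k • h ^ k with hzdef
  have hzmem : z ∈ sgen 𝔅 h := by
    apply sum_mem_sgen
    intro k _
    match k with
    | 0 => rw [hp'c0, zero_smul]; exact zero_mem_sgen
    | (j + 1) => exact smul_mem_sgen _ (pow_mem_sgen j)
  have hzx : ∀ x, z x = Polynomial.eval (h x) p' := by
    intro x
    rw [Polynomial.eval_eq_sum_range, hzdef]
    rw [BoundedContinuousFunction.coe_sum, Finset.sum_apply]
    simp
  refine ⟨z, hzmem, ?_⟩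
  rw [dist_eq_norm]
  have : ‖y - z‖ ≤ ε / 2 := by
    rw [BoundedContinuousFunction.norm_le (by positivity)]
    intro x
    rw [BoundedContinuousFunction.coe_sub, Pi.sub_apply, hzx x, hxy x, hp'eval,
      Real.norm_eq_abs]
    have heq : φ (h x) - (Polynomial.eval (h x) p - Polynomial.eval 0 p)
        = (φ (h x) - Polynomial.eval (h x) p) + Polynomial.eval 0 p := by ring
    rw [heq]
    have := happ (h x) (hhmem x)
    calc |(φ (h x) - Polynomial.eval (h x) p) + Polynomial.eval 0 p|
        ≤ |φ (h x) - Polynomial.eval (h x) p| + |Polynomial.eval 0 p| := abs_add_le _ _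
      _ ≤ ε / 2 := by linarith
  linarith

end AuxMono2
section AuxMono3

open BoundedContinuousFunction

variable {X : Type u} [TopologicalSpace X] {𝔅 : Set (X →ᵇ ℝ)}

lemma rho_zero (ρ : QLF 𝔅) {h : X →ᵇ ℝ} (h𝔅 : h ∈ 𝔅) : ρ.toFun 0 = 0 := by
  have := ρ.smul_eq 0 h h𝔅
  rwa [zero_smul, zero_mul] at this

lemma rho_mono_sgen (hsub : IsSubalgS 𝔅) (ρ : QLF 𝔅) {h a b : X →ᵇ ℝ} (h𝔅 : h ∈ 𝔅)
    (ha : a ∈ sgen 𝔅 h) (hb : b ∈ sgen 𝔅 h) (hab : a ≤ b) : ρ.toFun a ≤ ρ.toFun b := by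
  have hba : b - a ∈ sgen 𝔅 h := by
    have h2 : b + (-1 : ℝ) • a ∈ sgen 𝔅 h := add_mem_sgen hb (smul_mem_sgen _ ha)
    have e : b + (-1 : ℝ) • a = b - a := by
      rw [neg_one_smul ℝ a]; ring
    rwa [e] at h2
  have hsum : a + (b - a) = b := by ring
  have hadd := ρ.add_eq h h𝔅 a (b - a) ha hba
  rw [hsum] at hadd
  have hpos : 0 ≤ ρ.toFun (b - a) :=
    ρ.pos _ (sgen_subset hsub h𝔅 hba) (by rwa [sub_nonneg])
  linarith

lemma rho_sum (ρ : QLF 𝔅) {h : X →ᵇ ℝ} (h𝔅 : h ∈ 𝔅) (a : ℕ → X →ᵇ ℝ) (k : ℕ)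
    (ha : ∀ i ∈ Finset.range k, a i ∈ sgen 𝔅 h) :
    ρ.toFun (∑ i ∈ Finset.range k, a i) = ∑ i ∈ Finset.range k, ρ.toFun (a i) := by
  induction k with
  | zero => simpa using rho_zero ρ h𝔅
  | succ k ih =>
    have ha' : ∀ i ∈ Finset.range k, a i ∈ sgen 𝔅 h := fun i hi =>
      ha i (Finset.mem_range.2 (Nat.lt_succ_of_lt (Finset.mem_range.1 hi)))
    rw [Finset.sum_range_succ, Finset.sum_range_succ,
      ρ.add_eq h h𝔅 _ _ (sum_mem_sgen ha') (ha k (Finset.self_mem_range_succ k)), ih ha']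

/-- Key lemma: if `0 ≤ u ≤ 1` and `v ≥ 1` on the support of `u`, `v ≥ 0`, then
`ρ(u) ≤ ρ(v)`. -/
lemma rho_le_of_one_on_tsupport (hsub : IsSubalgS 𝔅) (hCc : CcS X ⊆ 𝔅) (ρ : QLF 𝔅)
    {u v : X →ᵇ ℝ} (hu : u ∈ CcS X) (hv : v ∈ CcS X)
    (hu0 : 0 ≤ u) (hu1 : u ≤ 1) (hv0 : 0 ≤ v)
    (hv1 : ∀ x ∈ tsupport (u : X → ℝ), 1 ≤ v x) :
    ρ.toFun u ≤ ρ.toFun v := by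
  have hu0' : ∀ x, 0 ≤ u x := hu0
  have hu1' : ∀ x, u x ≤ 1 := hu1
  have hv0' : ∀ x, 0 ≤ v x := hv0
  set w : X →ᵇ ℝ := v ⊓ 1 with hwdef
  have hwx : ∀ x, w x = min (v x) 1 := by
    intro x
    simp [hwdef]
  have hw : w ∈ CcS X := by
    apply HasCompactSupport.mono hv
    intro x hx
    simp only [Function.mem_support] at hx ⊢
    intro hvx
    apply hx
    rw [hwx x, hvx]
    simp
  have hw0 : ∀ x, 0 ≤ w x := fun x => by
    rw [hwx x]; exact le_min (hv0' x) zero_le_one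
  have hw1 : ∀ x, w x ≤ 1 := fun x => by rw [hwx x]; exact min_le_right _ _
  have hwv : ∀ x, w x ≤ v x := fun x => by rw [hwx x]; exact min_le_left _ _
  have hw1' : ∀ x ∈ tsupport (u : X → ℝ), w x = 1 := by
    intro x hx
    rw [hwx x, min_eq_right (hv1 x hx)]
  -- w ∈ B(v), hence ρ(w) ≤ ρ(v)
  have hwmem : w ∈ sgen 𝔅 v := by
    apply comp_mem_sgen hsub (hCc hv) (hCc hw) (φ := fun t => min t 1)
    · exact continuous_id.min continuous_const
    · simp
    · exact hwx
  have hwv' : ρ.toFun w ≤ ρ.toFun v :=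
    rho_mono_sgen hsub ρ (hCc hv) hwmem self_mem_sgen hwv
  -- u and w both belong to B(u + w)
  have huw : u + w ∈ CcS X := hu.add hw
  have humem : u ∈ sgen 𝔅 (u + w) := by
    apply comp_mem_sgen hsub (hCc huw) (hCc hu) (φ := fun t => max (t - 1) 0)
    · fun_prop
    · simp
    · intro x
      by_cases hx : x ∈ tsupport (u : X → ℝ)
      · rw [BoundedContinuousFunction.coe_add, Pi.add_apply, hw1' x hx]
        rw [show u x + 1 - 1 = u x by ring, max_eq_left (hu0' x)]
      · rw [image_eq_zero_of_notMem_tsupport hx, BoundedContinuousFunction.coe_add, Pi.add_apply,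
          image_eq_zero_of_notMem_tsupport hx, zero_add]
        rw [max_eq_right]
        linarith [hw1 x]
  have hwmem' : w ∈ sgen 𝔅 (u + w) := by
    apply comp_mem_sgen hsub (hCc huw) (hCc hw) (φ := fun t => min t 1)
    · exact continuous_id.min continuous_const
    · simp
    · intro x
      by_cases hx : x ∈ tsupport (u : X → ℝ)
      · rw [BoundedContinuousFunction.coe_add, Pi.add_apply, hw1' x hx, min_eq_right]
        linarith [hu0' x]
      · rw [BoundedContinuousFunction.coe_add, Pi.add_apply,
          image_eq_zero_of_notMem_tsupport hx, zero_add, min_eq_left (hw1 x)]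
  have huw' : u ≤ w := by
    intro x
    show u x ≤ w x
    by_cases hx : x ∈ tsupport (u : X → ℝ)
    · rw [hw1' x hx]; exact hu1' x
    · rw [image_eq_zero_of_notMem_tsupport hx]; exact hw0 x
  exact le_trans (rho_mono_sgen hsub ρ (hCc huw) humem hwmem' huw') hwv'

end AuxMono3
section AuxMono4

open BoundedContinuousFunction

/-- The "layer" function `t ↦ clamp((t-c)/δ, 0, 1)`. -/
noncomputable def layerFn (c δ t : ℝ) : ℝ := min (max (δ⁻¹ * (t - c)) 0) 1

lemma layerFn_continuous (c δ : ℝ) : Continuous (layerFn c δ) := by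
  unfold layerFn; fun_prop

lemma layerFn_nonneg (c δ t : ℝ) : 0 ≤ layerFn c δ t :=
  le_min (le_max_right _ _) zero_le_one

lemma layerFn_le_one (c δ t : ℝ) : layerFn c δ t ≤ 1 := min_le_right _ _

lemma layerFn_eq_zero {c δ t : ℝ} (hδ : 0 < δ) (h : t ≤ c) : layerFn c δ t = 0 := by
  unfold layerFn
  rw [max_eq_right, min_eq_left zero_le_one]
  have : δ⁻¹ * (t - c) ≤ 0 := mul_nonpos_of_nonneg_of_nonpos (by positivity) (by linarith)
  linarith

lemma layerFn_zero {c δ : ℝ} (hδ : 0 < δ) (hc : 0 ≤ c) : layerFn c δ 0 = 0 :=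
  layerFn_eq_zero hδ (by linarith)

lemma layerFn_eq_one {c δ t : ℝ} (hδ : 0 < δ) (h : c + δ ≤ t) : layerFn c δ t = 1 := by
  unfold layerFn
  have h1 : (1 : ℝ) ≤ δ⁻¹ * (t - c) := by
    rw [← inv_mul_cancel₀ (ne_of_gt hδ)]
    apply mul_le_mul_of_nonneg_left _ (by positivity)
    linarith
  rw [max_eq_left (by linarith), min_eq_right h1]

lemma layerFn_ne_zero {c δ t : ℝ} (hδ : 0 < δ) (h : layerFn c δ t ≠ 0) : c ≤ t := by
  by_contra hc
  exact h (layerFn_eq_zero hδ (by linarith))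

lemma layerFn_sum {δ : ℝ} (hδ : 0 < δ) (t : ℝ) (ht : 0 ≤ t) (k : ℕ) :
    ∑ i ∈ Finset.range k, δ * layerFn ((i : ℝ) * δ) δ t = min t ((k : ℝ) * δ) := by
  induction k with
  | zero => simp [min_eq_right ht]
  | succ k ih =>
    rw [Finset.sum_range_succ, ih]
    push_cast
    rcases le_total t ((k : ℝ) * δ) with h1 | h1
    · rw [layerFn_eq_zero hδ h1, min_eq_left h1, min_eq_left (by nlinarith)]
      ring
    · rw [min_eq_right h1]
      have hnn : 0 ≤ δ⁻¹ * (t - (k : ℝ) * δ) :=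
        mul_nonneg (by positivity) (by linarith)
      unfold layerFn
      rw [max_eq_left hnn]
      rcases le_total (δ⁻¹ * (t - (k : ℝ) * δ)) 1 with h2 | h2
      · rw [min_eq_left h2]
        have he : δ * (δ⁻¹ * (t - (k : ℝ) * δ)) = t - (k : ℝ) * δ := by
          field_simp
        rw [he]
        have h3 : t ≤ ((k : ℝ) + 1) * δ := by nlinarith [he]
        rw [min_eq_left h3]
        ring
      · rw [min_eq_right h2, mul_one]
        have h3 : ((k : ℝ) + 1) * δ ≤ t := by
          have := mul_le_mul_of_nonneg_left h2 hδ.le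
          have he : δ * (δ⁻¹ * (t - (k : ℝ) * δ)) = t - (k : ℝ) * δ := by field_simp
          rw [he, mul_one] at this
          linarith
        rw [min_eq_right h3]
        ring

variable {X : Type u} [TopologicalSpace X] {𝔅 : Set (X →ᵇ ℝ)}

lemma lay_apply (F : X →ᵇ ℝ) (c δ : ℝ) (x : X) :
    (((δ⁻¹ • (F - BoundedContinuousFunction.const X c)) ⊔ 0) ⊓ 1) x = layerFn c δ (F x) := by
  simp [layerFn, smul_eq_mul]

end AuxMono4
section AuxMono5

open BoundedContinuousFunction

variable {X : Type u} [TopologicalSpace X]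

lemma rho_mono_nonneg_aux [LocallyCompactSpace X] [T2Space X]
    {𝔅 : Set (X →ᵇ ℝ)} (hsub : IsSubalgS 𝔅) (hCc : CcS X ⊆ 𝔅) (ρ : QLF 𝔅)
    {f g : X →ᵇ ℝ} (hf : f ∈ CcS X) (hg : g ∈ CcS X)
    (hg0 : 0 ≤ g) (hgf : g ≤ f) (hf1 : f ≤ 1) : ρ.toFun g ≤ ρ.toFun f := by
  have hg0' : ∀ x, 0 ≤ g x := hg0
  have hgf' : ∀ x, g x ≤ f x := hgf
  have hf1' : ∀ x, f x ≤ 1 := hf1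
  have hf0' : ∀ x, 0 ≤ f x := fun x => le_trans (hg0' x) (hgf' x)
  have hgC : HasCompactSupport (g : X → ℝ) := hg
  have hfC : HasCompactSupport (f : X → ℝ) := hf
  -- a compactly supported function equal to 1 on the support of g
  obtain ⟨ψ, hψ1, -, hψC, hψmem⟩ :=
    exists_continuous_one_zero_of_isCompact hgC isClosed_empty (Set.disjoint_empty _)
  set w₀ : X →ᵇ ℝ := BoundedContinuousFunction.ofNormedAddCommGroup ψ ψ.continuous 1
    (fun x => by
      rw [Real.norm_eq_abs, abs_le]
      exact ⟨by linarith [(hψmem x).1], (hψmem x).2⟩) with hw₀def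
  have hw₀x : ∀ x, w₀ x = ψ x := fun x => rfl
  have hw₀Cc : w₀ ∈ CcS X := by
    show HasCompactSupport (w₀ : X → ℝ)
    have : (w₀ : X → ℝ) = (ψ : X → ℝ) := rfl
    rwa [this]
  have hw₀0 : 0 ≤ w₀ := fun x => by
    have := (hψmem x).1
    rw [← hw₀x x] at this
    exact this
  -- main estimate for each n
  have key : ∀ n : ℕ, ρ.toFun g ≤ ρ.toFun f + (((n : ℝ) + 1))⁻¹ * ρ.toFun w₀ := by
    intro n
    set m : ℕ := n + 1 with hmdef
    set δ : ℝ := ((m : ℝ))⁻¹ with hδdef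
    have hδ : 0 < δ := by positivity
    have hmδ : (m : ℝ) * δ = 1 := by
      rw [hδdef, mul_inv_cancel₀]
      positivity
    have hiδ0 : ∀ i : ℕ, (0 : ℝ) ≤ (i : ℝ) * δ := fun i =>
      mul_nonneg (Nat.cast_nonneg i) hδ.le
    set u : ℕ → X →ᵇ ℝ := fun i =>
      ((δ⁻¹ • (g - BoundedContinuousFunction.const X ((i : ℝ) * δ))) ⊔ 0) ⊓ 1 with hudef
    set v : ℕ → X →ᵇ ℝ := fun i =>
      ((δ⁻¹ • (f - BoundedContinuousFunction.const X ((i : ℝ) * δ))) ⊔ 0) ⊓ 1 with hvdef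
    have hux : ∀ i x, u i x = layerFn ((i : ℝ) * δ) δ (g x) := fun i x =>
      lay_apply g ((i : ℝ) * δ) δ x
    have hvx : ∀ i x, v i x = layerFn ((i : ℝ) * δ) δ (f x) := fun i x =>
      lay_apply f ((i : ℝ) * δ) δ x
    have husupp : ∀ i, Function.support (u i : X → ℝ) ⊆ Function.support (g : X → ℝ) := by
      intro i x hx
      simp only [Function.mem_support] at hx ⊢
      intro hgx
      exact hx (by rw [hux i x, hgx, layerFn_zero hδ (hiδ0 i)])
    have hvsupp : ∀ i, Function.support (v i : X → ℝ) ⊆ Function.support (f : X → ℝ) := by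
      intro i x hx
      simp only [Function.mem_support] at hx ⊢
      intro hfx
      exact hx (by rw [hvx i x, hfx, layerFn_zero hδ (hiδ0 i)])
    have huCc : ∀ i, u i ∈ CcS X := fun i => hgC.mono (husupp i)
    have hvCc : ∀ i, v i ∈ CcS X := fun i => hfC.mono (hvsupp i)
    have husgen : ∀ i, u i ∈ sgen 𝔅 g := fun i =>
      comp_mem_sgen hsub (hCc hg) (hCc (huCc i)) (layerFn_continuous _ _)
        (layerFn_zero hδ (hiδ0 i)) (hux i)
    have hvsgen : ∀ i, v i ∈ sgen 𝔅 f := fun i =>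
      comp_mem_sgen hsub (hCc hf) (hCc (hvCc i)) (layerFn_continuous _ _)
        (layerFn_zero hδ (hiδ0 i)) (hvx i)
    have hu0 : ∀ i, (0 : X →ᵇ ℝ) ≤ u i := fun i x => by
      have := layerFn_nonneg ((i : ℝ) * δ) δ (g x)
      rw [← hux i x] at this
      exact this
    have hu1 : ∀ i, u i ≤ 1 := fun i x => by
      have := layerFn_le_one ((i : ℝ) * δ) δ (g x)
      rw [← hux i x] at this
      exact this
    have hv0 : ∀ i, (0 : X →ᵇ ℝ) ≤ v i := fun i x => by
      have := layerFn_nonneg ((i : ℝ) * δ) δ (f x)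
      rw [← hvx i x] at this
      exact this
    -- the sum identities
    have hgsum : (∑ i ∈ Finset.range m, δ • u i) = g := by
      ext x
      rw [BoundedContinuousFunction.coe_sum, Finset.sum_apply]
      have : ∀ i ∈ Finset.range m, (δ • u i) x = δ * layerFn ((i : ℝ) * δ) δ (g x) := by
        intro i _
        rw [BoundedContinuousFunction.coe_smul]
        simp [hux i x, smul_eq_mul]
      rw [Finset.sum_congr rfl this, layerFn_sum hδ (g x) (hg0' x), hmδ,
        min_eq_left (le_trans (hgf' x) (hf1' x))]
    have hfsum : (∑ i ∈ Finset.range m, δ • v i) = f := by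
      ext x
      rw [BoundedContinuousFunction.coe_sum, Finset.sum_apply]
      have : ∀ i ∈ Finset.range m, (δ • v i) x = δ * layerFn ((i : ℝ) * δ) δ (f x) := by
        intro i _
        rw [BoundedContinuousFunction.coe_smul]
        simp [hvx i x, smul_eq_mul]
      rw [Finset.sum_congr rfl this, layerFn_sum hδ (f x) (hf0' x), hmδ,
        min_eq_left (hf1' x)]
    have hrg : ρ.toFun g = ∑ i ∈ Finset.range m, δ * ρ.toFun (u i) := by
      rw [← hgsum, rho_sum ρ (hCc hg) _ m
        (fun i _ => smul_mem_sgen δ (husgen i))]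
      exact Finset.sum_congr rfl fun i _ => ρ.smul_eq δ (u i) (hCc (huCc i))
    have hrf : ρ.toFun f = ∑ i ∈ Finset.range m, δ * ρ.toFun (v i) := by
      rw [← hfsum, rho_sum ρ (hCc hf) _ m
        (fun i _ => smul_mem_sgen δ (hvsgen i))]
      exact Finset.sum_congr rfl fun i _ => ρ.smul_eq δ (v i) (hCc (hvCc i))
    -- termwise comparisons
    have hterm0 : ρ.toFun (u 0) ≤ ρ.toFun w₀ := by
      apply rho_le_of_one_on_tsupport hsub hCc ρ (huCc 0) hw₀Cc (hu0 0) (hu1 0) hw₀0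
      intro x hx
      have hxg : x ∈ tsupport (g : X → ℝ) := closure_mono (husupp 0) hx
      rw [hw₀x x, hψ1 hxg]
      rfl
    have htermi : ∀ i : ℕ, ρ.toFun (u (i + 1)) ≤ ρ.toFun (v i) := by
      intro i
      apply rho_le_of_one_on_tsupport hsub hCc ρ (huCc (i + 1)) (hvCc i)
        (hu0 (i + 1)) (hu1 (i + 1)) (hv0 i)
      intro x hx
      have hclosed : IsClosed {y : X | ((i : ℝ) + 1) * δ ≤ g y} :=
        isClosed_le continuous_const g.continuous
      have hsub' : tsupport (u (i + 1) : X → ℝ) ⊆ {y : X | ((i : ℝ) + 1) * δ ≤ g y} := by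
        apply closure_minimal _ hclosed
        intro y hy
        simp only [Function.mem_support] at hy
        rw [hux (i + 1) y] at hy
        have := layerFn_ne_zero hδ hy
        push_cast at this 
        exact this
      have hgx : ((i : ℝ) + 1) * δ ≤ g x := hsub' hx
      have hfx : (i : ℝ) * δ + δ ≤ f x := by
        have := hgf' x
        nlinarith
      rw [hvx i x, layerFn_eq_one hδ hfx]
    -- put everything together
    have hsplit : ∑ i ∈ Finset.range m, δ * ρ.toFun (u i)
        = (∑ i ∈ Finset.range n, δ * ρ.toFun (u (i + 1))) + δ * ρ.toFun (u 0) :=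
      Finset.sum_range_succ' _ n
    have hb1 : ∑ i ∈ Finset.range n, δ * ρ.toFun (u (i + 1))
        ≤ ∑ i ∈ Finset.range n, δ * ρ.toFun (v i) :=
      Finset.sum_le_sum fun i _ => mul_le_mul_of_nonneg_left (htermi i) hδ.le
    have hb2 : ∑ i ∈ Finset.range n, δ * ρ.toFun (v i)
        ≤ ∑ i ∈ Finset.range m, δ * ρ.toFun (v i) := by
      apply Finset.sum_le_sum_of_subset_of_nonneg
      · exact Finset.range_subset_range.2 (Nat.le_succ n)
      · intro i _ _
        exact mul_nonneg hδ.le (ρ.pos _ (hCc (hvCc i)) (hv0 i))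
    have hb0 : δ * ρ.toFun (u 0) ≤ δ * ρ.toFun w₀ :=
      mul_le_mul_of_nonneg_left hterm0 hδ.le
    have hδeq : δ = ((n : ℝ) + 1)⁻¹ := by
      rw [hδdef, hmdef]
      push_cast
      rfl
    calc ρ.toFun g = ∑ i ∈ Finset.range m, δ * ρ.toFun (u i) := hrg
      _ = (∑ i ∈ Finset.range n, δ * ρ.toFun (u (i + 1))) + δ * ρ.toFun (u 0) := hsplit
      _ ≤ (∑ i ∈ Finset.range m, δ * ρ.toFun (v i)) + δ * ρ.toFun w₀ := by
          have := le_trans hb1 hb2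
          linarith
      _ = ρ.toFun f + ((n : ℝ) + 1)⁻¹ * ρ.toFun w₀ := by rw [← hrf, hδeq]
  -- pass to the limit
  have hT : Filter.Tendsto (fun n : ℕ => ρ.toFun f + ((n : ℝ) + 1)⁻¹ * ρ.toFun w₀)
      Filter.atTop (nhds (ρ.toFun f)) := by
    have h1 : Filter.Tendsto (fun n : ℕ => ((n : ℝ) + 1)⁻¹) Filter.atTop (nhds 0) := by
      simpa [one_div] using (tendsto_one_div_add_atTop_nhds_zero_nat :
        Tendsto (fun n : ℕ => 1 / ((n : ℝ) + 1)) atTop (𝓝 0))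
    have h2 := (h1.mul_const (ρ.toFun w₀)).const_add (ρ.toFun f)
    simpa using h2
  exact ge_of_tendsto' hT key

end AuxMono5
section AuxMono6

open BoundedContinuousFunction

variable {X : Type u} [TopologicalSpace X]

lemma rho_mono_nonneg [LocallyCompactSpace X] [T2Space X]
    {𝔅 : Set (X →ᵇ ℝ)} (hsub : IsSubalgS 𝔅) (hCc : CcS X ⊆ 𝔅) (ρ : QLF 𝔅)
    {f g : X →ᵇ ℝ} (hf : f ∈ CcS X) (hg : g ∈ CcS X)
    (hg0 : 0 ≤ g) (hgf : g ≤ f) : ρ.toFun g ≤ ρ.toFun f := by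
  have hg0' : ∀ x, 0 ≤ g x := hg0
  have hgf' : ∀ x, g x ≤ f x := hgf
  set c : ℝ := ‖f‖ + 1 with hcdef
  have hc : 0 < c := by positivity
  have hfc : ∀ x, f x ≤ c := by
    intro x
    have h1 : f x ≤ |f x| := le_abs_self _
    have h2 : ‖f x‖ ≤ ‖f‖ := f.norm_coe_le_norm x
    rw [Real.norm_eq_abs] at h2
    linarith
  have hfC : HasCompactSupport (f : X → ℝ) := hf
  have hgC : HasCompactSupport (g : X → ℝ) := hg
  have hsmulsupp : ∀ (F : X →ᵇ ℝ), Function.support ((c⁻¹ • F : X →ᵇ ℝ) : X → ℝ)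
      ⊆ Function.support (F : X → ℝ) := by
    intro F x hx
    simp only [Function.mem_support] at hx ⊢
    intro hFx
    apply hx
    show c⁻¹ • F x = 0
    rw [hFx, smul_zero]
  have hf' : c⁻¹ • f ∈ CcS X := hfC.mono (hsmulsupp f)
  have hg' : c⁻¹ • g ∈ CcS X := hgC.mono (hsmulsupp g)
  have h1 : ρ.toFun (c⁻¹ • g) ≤ ρ.toFun (c⁻¹ • f) := by
    apply rho_mono_nonneg_aux hsub hCc ρ hf' hg'
    · intro x
      have : (0 : ℝ) ≤ c⁻¹ * g x := mul_nonneg (by positivity) (hg0' x)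
      exact this
    · intro x
      have : c⁻¹ * g x ≤ c⁻¹ * f x :=
        mul_le_mul_of_nonneg_left (hgf' x) (by positivity)
      exact this
    · intro x
      have : c⁻¹ * f x ≤ 1 := by
        rw [← inv_mul_cancel₀ (ne_of_gt hc)]
        exact mul_le_mul_of_nonneg_left (hfc x) (by positivity)
      exact this
  rw [ρ.smul_eq c⁻¹ g (hCc hg), ρ.smul_eq c⁻¹ f (hCc hf)] at h1
  have := mul_le_mul_of_nonneg_left h1 hc.le
  rw [← mul_assoc, ← mul_assoc, mul_inv_cancel₀ (ne_of_gt hc), one_mul, one_mul] at this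
  exact this

lemma max_sub_max_neg (r : ℝ) : max r 0 - max (-r) 0 = r := by
  rcases le_total r 0 with h | h
  · rw [max_eq_right h, max_eq_left (by linarith), zero_sub, neg_neg]
  · rw [max_eq_left h, max_eq_right (by linarith), sub_zero]

end AuxMono6

/-- a (positive) quasi-linear functional is monotone on `C_c(X)`. -/
theorem qlf_monotone_on_compactSupport {X : Type u} [TopologicalSpace X]
    [LocallyCompactSpace X] [T2Space X] [ConnectedSpace X]
    (𝔅 : Set (X →ᵇ ℝ)) (hsub : IsSubalgS 𝔅) (hCc : CcS X ⊆ 𝔅) (ρ : QLF 𝔅)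
    (f g : X →ᵇ ℝ) (hf : f ∈ CcS X) (hg : g ∈ CcS X) (hle : g ≤ f) :
    ρ.toFun g ≤ ρ.toFun f := by
  classical
  have hle' : ∀ x, g x ≤ f x := hle
  have hfC : HasCompactSupport (f : X → ℝ) := hf
  have hgC : HasCompactSupport (g : X → ℝ) := hg
  -- positive and negative parts
  set gp : X →ᵇ ℝ := g ⊔ 0 with hgpdef
  set gn : X →ᵇ ℝ := (-g) ⊔ 0 with hgndef
  set fp : X →ᵇ ℝ := f ⊔ 0 with hfpdef
  set fn : X →ᵇ ℝ := (-f) ⊔ 0 with hfndef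
  have hgpx : ∀ x, gp x = max (g x) 0 := fun x => by simp [hgpdef]
  have hgnx : ∀ x, gn x = max (-g x) 0 := fun x => by simp [hgndef]
  have hfpx : ∀ x, fp x = max (f x) 0 := fun x => by simp [hfpdef]
  have hfnx : ∀ x, fn x = max (-f x) 0 := fun x => by simp [hfndef]
  -- compact supports
  have hsupp : ∀ (F P : X →ᵇ ℝ), (∀ x, F x = 0 → P x = 0) →
      Function.support (P : X → ℝ) ⊆ Function.support (F : X → ℝ) := by
    intro F P hFP x hx
    simp only [Function.mem_support] at hx ⊢
    intro hFx
    exact hx (hFP x hFx)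
  have hgpC : gp ∈ CcS X := hgC.mono (hsupp g gp fun x hx => by rw [hgpx x, hx]; simp)
  have hgnC : gn ∈ CcS X := hgC.mono (hsupp g gn fun x hx => by rw [hgnx x, hx]; simp)
  have hfpC : fp ∈ CcS X := hfC.mono (hsupp f fp fun x hx => by rw [hfpx x, hx]; simp)
  have hfnC : fn ∈ CcS X := hfC.mono (hsupp f fn fun x hx => by rw [hfnx x, hx]; simp)
  -- membership in singly generated subalgebras
  have hgpS : gp ∈ sgen 𝔅 g :=
    comp_mem_sgen hsub (hCc hg) (hCc hgpC) (φ := fun t => max t 0)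
      (continuous_id.max continuous_const) (by simp) hgpx
  have hgnS : gn ∈ sgen 𝔅 g :=
    comp_mem_sgen hsub (hCc hg) (hCc hgnC) (φ := fun t => max (-t) 0)
      (continuous_neg.max continuous_const) (by simp) hgnx
  have hfpS : fp ∈ sgen 𝔅 f :=
    comp_mem_sgen hsub (hCc hf) (hCc hfpC) (φ := fun t => max t 0)
      (continuous_id.max continuous_const) (by simp) hfpx
  have hfnS : fn ∈ sgen 𝔅 f :=
    comp_mem_sgen hsub (hCc hf) (hCc hfnC) (φ := fun t => max (-t) 0)
      (continuous_neg.max continuous_const) (by simp) hfnx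
  -- decompositions
  have hgdec : gp + (-1 : ℝ) • gn = g := by
    ext x
    show gp x + (-1 : ℝ) • gn x = g x
    rw [hgpx x, hgnx x, smul_eq_mul]
    have := max_sub_max_neg (g x)
    linarith
  have hfdec : fp + (-1 : ℝ) • fn = f := by
    ext x
    show fp x + (-1 : ℝ) • fn x = f x
    rw [hfpx x, hfnx x, smul_eq_mul]
    have := max_sub_max_neg (f x)
    linarith
  have hrg : ρ.toFun g = ρ.toFun gp - ρ.toFun gn := by
    rw [← hgdec, ρ.add_eq g (hCc hg) _ _ hgpS (smul_mem_sgen _ hgnS),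
      ρ.smul_eq (-1) gn (hCc hgnC)]
    ring
  have hrf : ρ.toFun f = ρ.toFun fp - ρ.toFun fn := by
    rw [← hfdec, ρ.add_eq f (hCc hf) _ _ hfpS (smul_mem_sgen _ hfnS),
      ρ.smul_eq (-1) fn (hCc hfnC)]
    ring
  -- monotonicity on nonnegative parts
  have h1 : ρ.toFun gp ≤ ρ.toFun fp := by
    apply rho_mono_nonneg hsub hCc ρ hfpC hgpC
    · intro x
      have : (0 : ℝ) ≤ max (g x) 0 := le_max_right _ _
      rw [← hgpx x] at this
      exact this
    · intro x
      have : max (g x) 0 ≤ max (f x) 0 := max_le_max (hle' x) le_rfl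
      rw [← hgpx x, ← hfpx x] at this
      exact this
  have h2 : ρ.toFun fn ≤ ρ.toFun gn := by
    apply rho_mono_nonneg hsub hCc ρ hgnC hfnC
    · intro x
      have : (0 : ℝ) ≤ max (-f x) 0 := le_max_right _ _
      rw [← hfnx x] at this
      exact this
    · intro x
      have : max (-f x) 0 ≤ max (-g x) 0 := max_le_max (by linarith [hle' x]) le_rfl
      rw [← hfnx x, ← hgnx x] at this
      exact this
  rw [hrg, hrf]
  linarith
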